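/- Let G and H be two n-vertex graphs whose Laplacian characteristic polynomials are det(λI - L(G)) = ∑_{k=0}^n (-1)^k c_k(G) λ^{n-k} and similarly for H. If c_k(G) ≤ c_k(H) for k = 1,...,n-1, then LEL(G) ≤ LEL(H), where LEL is the sum of square roots of Laplacian eigenvalues. Moreover, if c_k(G) < c_k(H) for some k, then LEL(G) < LEL(H). -/

import Mathlib

open Finset MeasureTheory Set Filter Polynomial

noncomputable def lelF (x t : ℝ) : ℝ :=
  -2 * Real.log (1 + x * t) / Real.sqrt t
    + 4 * Real.sqrt x * Real.arctan (Real.sqrt x * Real.sqrt t)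

noncomputable def lelg (x t : ℝ) : ℝ := Real.log (1 + x * t) / (t * Real.sqrt t)

lemma lelF_hasDerivAt {x t : ℝ} (hx : 0 ≤ x) (ht : 0 < t) :
    HasDerivAt (lelF x) (lelg x t) t := by
  have hst : Real.sqrt t ≠ 0 := by positivity
  have h1 : (0:ℝ) < 1 + x * t := by positivity
  have hsq : HasDerivAt Real.sqrt (1 / (2 * Real.sqrt t)) t := Real.hasDerivAt_sqrt ht.ne'
  have hlog : HasDerivAt (fun t => -2 * Real.log (1 + x * t)) (-2 * (x / (1 + x * t))) t := by
    have h0 : HasDerivAt (fun t : ℝ => 1 + x * t) x t := by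
      simpa using ((hasDerivAt_id t).const_mul x).const_add 1
    simpa using (h0.log h1.ne').const_mul (-2)
  have h2 := hlog.div hsq hst
  have h3 : HasDerivAt (fun t => Real.sqrt x * Real.sqrt t)
      (Real.sqrt x * (1 / (2 * Real.sqrt t))) t := hsq.const_mul _
  have h4 := (h3.arctan).const_mul (4 * Real.sqrt x)
  have h5 := h2.add h4
  convert h5 using 1
  · rfl
  · rfl
  · rfl
  obtain ⟨s, hs0, rfl⟩ : ∃ s : ℝ, 0 < s ∧ s ^ 2 = t :=
    ⟨Real.sqrt t, Real.sqrt_pos.2 ht, Real.sq_sqrt ht.le⟩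
  obtain ⟨y, hy0, rfl⟩ : ∃ y : ℝ, 0 ≤ y ∧ y ^ 2 = x :=
    ⟨Real.sqrt x, Real.sqrt_nonneg x, Real.sq_sqrt hx⟩
  rw [Real.sqrt_sq hs0.le, Real.sqrt_sq hy0]
  have h6 : (0:ℝ) < 1 + y ^ 2 * s ^ 2 := by positivity
  have h7 : (0:ℝ) < 1 + (y * s) ^ 2 := by positivity
  rw [lelg, Real.sqrt_sq hs0.le]
  field_simp
  ring

lemma lelF_zero (x : ℝ) : lelF x 0 = 0 := by simp [lelF]

lemma lelF_continuousWithinAt {x : ℝ} (hx : 0 ≤ x) :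
    ContinuousWithinAt (lelF x) (Ici 0) 0 := by
  have h2 : ContinuousWithinAt
      (fun t => 4 * Real.sqrt x * Real.arctan (Real.sqrt x * Real.sqrt t)) (Ici 0) 0 :=
    (continuous_const.mul (Real.continuous_arctan.comp
      (continuous_const.mul Real.continuous_sqrt))).continuousWithinAt
  have h1 : ContinuousWithinAt (fun t => -2 * Real.log (1 + x * t) / Real.sqrt t) (Ici 0) 0 := by
    unfold ContinuousWithinAt
    have hval : (fun t => -2 * Real.log (1 + x * t) / Real.sqrt t) 0 = 0 := by simp
    rw [hval]
    apply tendsto_of_tendsto_of_tendsto_of_le_of_le'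
      (g := fun t : ℝ => -2 * x * Real.sqrt t) (h := fun _ : ℝ => (0:ℝ))
    · have : Tendsto (fun t : ℝ => -2 * x * Real.sqrt t) (nhdsWithin 0 (Ici 0))
          (nhds (-2 * x * Real.sqrt 0)) :=
        ((continuous_const.mul Real.continuous_sqrt).tendsto 0).mono_left nhdsWithin_le_nhds
      simpa using this
    · exact tendsto_const_nhds
    · filter_upwards [self_mem_nhdsWithin] with t htmem
      rcases eq_or_lt_of_le (Set.mem_Ici.mp htmem) with rfl | ht
      · simp
      · have hst : 0 < Real.sqrt t := Real.sqrt_pos.2 ht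
        have hlogle : Real.log (1 + x * t) ≤ x * t := by
          have := Real.log_le_sub_one_of_pos (x := 1 + x * t) (by positivity)
          linarith
        have key : 2 * Real.log (1 + x * t) / Real.sqrt t ≤ 2 * x * Real.sqrt t := by
          rw [div_le_iff₀ hst]
          have hss : Real.sqrt t * Real.sqrt t = t := Real.mul_self_sqrt ht.le
          nlinarith [hlogle, hst]
        have : -2 * Real.log (1 + x * t) / Real.sqrt t
            = -(2 * Real.log (1 + x * t) / Real.sqrt t) := by ring
        rw [this]
        linarith
    · filter_upwards [self_mem_nhdsWithin] with t htmem
      have hlognn : 0 ≤ Real.log (1 + x * t) := by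
        apply Real.log_nonneg
        have : 0 ≤ x * t := mul_nonneg hx (htmem : (0:ℝ) ≤ t)
        linarith
      apply div_nonpos_of_nonpos_of_nonneg
      · linarith
      · exact Real.sqrt_nonneg t
  exact h1.add h2

lemma sqrt_tendsto_atTop : Tendsto Real.sqrt atTop atTop := by
  rw [tendsto_atTop]
  intro b
  filter_upwards [eventually_ge_atTop (b ^ 2)] with t ht
  calc b ≤ |b| := le_abs_self b
  _ = Real.sqrt (b ^ 2) := (Real.sqrt_sq_eq_abs b).symm
  _ ≤ Real.sqrt t := Real.sqrt_le_sqrt ht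

lemma lelF_tendsto_atTop {x : ℝ} (hx : 0 < x) :
    Tendsto (lelF x) atTop (nhds (2 * Real.pi * Real.sqrt x)) := by
  have hsx : 0 < Real.sqrt x := Real.sqrt_pos.2 hx
  have harg : Tendsto (fun t => Real.sqrt x * Real.sqrt t) atTop atTop :=
    sqrt_tendsto_atTop.const_mul_atTop hsx
  have hterm2 : Tendsto (fun t => 4 * Real.sqrt x * Real.arctan (Real.sqrt x * Real.sqrt t))
      atTop (nhds (4 * Real.sqrt x * (Real.pi / 2))) :=
    (((Real.tendsto_arctan_atTop.mono_right nhdsWithin_le_nhds).comp harg)).const_mul _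
  have hlogdiv : Tendsto (fun t : ℝ => Real.log t / Real.sqrt t) atTop (nhds 0) := by
    have h := (isLittleO_log_rpow_atTop one_half_pos).tendsto_div_nhds_zero
    refine h.congr' ?_
    filter_upwards with t
    rw [Real.sqrt_eq_rpow]
  have hconstdiv : Tendsto (fun t : ℝ => Real.log (1 + x) / Real.sqrt t) atTop (nhds 0) :=
    tendsto_const_nhds.div_atTop sqrt_tendsto_atTop
  have hU : Tendsto (fun t : ℝ => -2 * (Real.log (1 + x) / Real.sqrt t + Real.log t / Real.sqrt t))
      atTop (nhds 0) := by
    have := (hconstdiv.add hlogdiv).const_mul (-2 : ℝ)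
    simpa using this
  have hterm1 : Tendsto (fun t : ℝ => -2 * Real.log (1 + x * t) / Real.sqrt t) atTop (nhds 0) := by
    apply tendsto_of_tendsto_of_tendsto_of_le_of_le' hU tendsto_const_nhds
    · filter_upwards [eventually_ge_atTop (1:ℝ)] with t ht
      have ht0 : (0:ℝ) < t := lt_of_lt_of_le one_pos ht
      have hst : 0 < Real.sqrt t := Real.sqrt_pos.2 ht0
      have hlogle : Real.log (1 + x * t) ≤ Real.log (1 + x) + Real.log t := by
        rw [← Real.log_mul (by positivity) (by positivity)]
        apply Real.log_le_log (by positivity)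
        nlinarith
      have heq : -2 * (Real.log (1 + x) / Real.sqrt t + Real.log t / Real.sqrt t)
          = (-2 * (Real.log (1 + x) + Real.log t)) / Real.sqrt t := by ring
      rw [heq]
      exact (div_le_div_iff_of_pos_right hst).2 (by linarith)
    · filter_upwards [eventually_ge_atTop (0:ℝ)] with t ht
      have hlognn : 0 ≤ Real.log (1 + x * t) :=
        Real.log_nonneg (by nlinarith)
      apply div_nonpos_of_nonpos_of_nonneg (by linarith) (Real.sqrt_nonneg t)
  have := hterm1.add hterm2
  rw [zero_add] at this
  convert this using 2
  · rfl
  · ring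

lemma lelg_nonneg {x : ℝ} (hx : 0 ≤ x) {t : ℝ} (ht : 0 < t) : 0 ≤ lelg x t := by
  apply div_nonneg _ (by positivity)
  exact Real.log_nonneg (by nlinarith)

lemma lelg_integrableOn {x : ℝ} (hx : 0 ≤ x) : IntegrableOn (lelg x) (Ioi 0) := by
  rcases eq_or_lt_of_le hx with rfl | hx'
  · have : lelg 0 = fun _ : ℝ => (0:ℝ) := by
      funext t; simp [lelg]
    rw [this]
    exact integrableOn_zero
  · exact integrableOn_Ioi_deriv_of_nonneg (lelF_continuousWithinAt hx)
      (fun t ht => lelF_hasDerivAt hx ht) (fun t ht => lelg_nonneg hx ht)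
      (lelF_tendsto_atTop hx')

lemma lelg_integral {x : ℝ} (hx : 0 ≤ x) :
    ∫ t in Ioi (0:ℝ), lelg x t = 2 * Real.pi * Real.sqrt x := by
  rcases eq_or_lt_of_le hx with rfl | hx'
  · have : lelg 0 = fun _ : ℝ => (0:ℝ) := by funext t; simp [lelg]
    rw [this]
    simp
  · have := integral_Ioi_of_hasDerivAt_of_nonneg (lelF_continuousWithinAt hx)
      (fun t ht => lelF_hasDerivAt hx ht) (fun t ht => lelg_nonneg hx ht)
      (lelF_tendsto_atTop hx')
    rw [this]
    simp [lelF]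

lemma charpoly_eval_hermitian {n : ℕ} {A : Matrix (Fin n) (Fin n) ℝ} (hA : A.IsHermitian)
    (r : ℝ) : A.charpoly.eval r = ∏ i, (r - hA.eigenvalues i) := by
  rw [Matrix.charpoly, _root_.eval_det, Matrix.matPolyEquiv_charmatrix, eval_sub, eval_X, eval_C]
  set U : Matrix (Fin n) (Fin n) ℝ := (hA.eigenvectorUnitary : Matrix (Fin n) (Fin n) ℝ) with hU
  have hUU : U * star U = 1 := (Matrix.mem_unitaryGroup_iff).mp hA.eigenvectorUnitary.2
  have hscal : Matrix.scalar (Fin n) r = U * Matrix.scalar (Fin n) r * star U := by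
    rw [mul_assoc, (Matrix.scalar_commute r (Commute.all r) (star U)), ← mul_assoc, hUU,
      one_mul]
  conv_lhs => rw [hscal, hA.spectral_theorem]
  have hdiag : U * Matrix.scalar (Fin n) r * star U
      - U * Matrix.diagonal (RCLike.ofReal ∘ hA.eigenvalues) * star U
      = U * (Matrix.scalar (Fin n) r - Matrix.diagonal (RCLike.ofReal ∘ hA.eigenvalues))
        * star U := by
    rw [Matrix.mul_sub, Matrix.sub_mul]
  rw [Unitary.conjStarAlgAut_apply, ← hU, hdiag, Matrix.det_mul, Matrix.det_mul, mul_comm, ← mul_assoc,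
    mul_comm (Matrix.det (star U)), ← Matrix.det_mul, hUU, Matrix.det_one, one_mul]
  have : Matrix.scalar (Fin n) r - Matrix.diagonal (RCLike.ofReal ∘ hA.eigenvalues)
      = Matrix.diagonal (fun i => r - hA.eigenvalues i) := by
    rw [Matrix.scalar_apply, ← Matrix.diagonal_sub]
    congr 1
  rw [this, Matrix.det_diagonal]

lemma prod_one_add_eigen {n : ℕ} {A : Matrix (Fin n) (Fin n) ℝ} (hA : A.IsHermitian)
    {t : ℝ} (ht : 0 < t) :
    ∏ i, (1 + hA.eigenvalues i * t)
      = ∑ k ∈ range (n + 1), ((-1 : ℝ) ^ k * A.charpoly.coeff (n - k)) * t ^ k := by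
  have htne : t ≠ 0 := ht.ne'
  have hdeg : A.charpoly.natDegree = n := by
    simpa using A.charpoly_natDegree_eq_dim
  have heval : A.charpoly.eval (-(t⁻¹))
      = ∑ j ∈ range (n + 1), A.charpoly.coeff j * (-(t⁻¹)) ^ j := by
    rw [eval_eq_sum_range' (by omega : A.charpoly.natDegree < n + 1)]
  have hL : ∏ i, (1 + hA.eigenvalues i * t) = (-t) ^ n * A.charpoly.eval (-(t⁻¹)) := by
    rw [charpoly_eval_hermitian hA]
    have hcn : ((-t) ^ n : ℝ) = ∏ _i : Fin n, (-t) := by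
      rw [Finset.prod_const, Finset.card_univ, Fintype.card_fin]
    rw [hcn, ← Finset.prod_mul_distrib]
    apply Finset.prod_congr rfl
    intro i _
    field_simp
    ring
  rw [hL, heval, Finset.mul_sum]
  rw [← Finset.sum_range_reflect (fun k => (-1 : ℝ) ^ k * A.charpoly.coeff (n - k) * t ^ k) (n + 1)]
  apply Finset.sum_congr rfl
  intro j hj
  have hjn : j ≤ n := by simpa using Nat.lt_succ_iff.mp (Finset.mem_range.mp hj)
  rw [Nat.add_sub_cancel, Nat.sub_sub_self hjn]
  have h1 : (-(t⁻¹)) ^ j = (-1 : ℝ) ^ j * (t ^ j)⁻¹ := by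
    rw [neg_pow, inv_pow]
  have h2 : (t : ℝ) ^ n * (t ^ j)⁻¹ = t ^ (n - j) := by
    rw [eq_comm, pow_sub₀ t htne hjn]
  have h3 : ((-1 : ℝ)) ^ n * (-1) ^ j = (-1) ^ (n - j) := by
    rw [← pow_add]
    have hnj : n + j = (n - j) + 2 * j := by omega
    rw [hnj, pow_add, pow_mul, neg_one_sq, one_pow, mul_one]
  rw [neg_pow, h1, ← h3, ← h2]
  ring

lemma coeff_top_lap {n : ℕ} (M : Matrix (Fin n) (Fin n) ℝ) : M.charpoly.coeff n = 1 := by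
  have hd : M.charpoly.natDegree = n := by
    simpa using M.charpoly_natDegree_eq_dim
  have := (M.charpoly_monic).coeff_natDegree
  rwa [hd] at this

lemma lap_det_zero {n : ℕ} (hn : 0 < n) (G : SimpleGraph (Fin n)) [DecidableRel G.Adj] :
    (G.lapMatrix ℝ).det = 0 := by
  apply Matrix.exists_mulVec_eq_zero_iff.mp
  refine ⟨fun _ => 1, ?_, G.lapMatrix_mulVec_const_eq_zero⟩
  intro h
  have := congrFun h ⟨0, hn⟩
  norm_num at this

lemma coeff_zero_lap {n : ℕ} (hn : 0 < n) (G : SimpleGraph (Fin n)) [DecidableRel G.Adj] :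
    (G.lapMatrix ℝ).charpoly.coeff 0 = 0 := by
  have h := Matrix.det_eq_sign_charpoly_coeff (G.lapMatrix ℝ)
  rw [lap_det_zero hn G] at h
  rcases mul_eq_zero.mp h.symm with h1 | h1
  · exact absurd h1 (by positivity)
  · exact h1

theorem lel_mono_of_laplacian_coeff_le (n : ℕ) (G H : SimpleGraph (Fin n))
    [DecidableRel G.Adj] [DecidableRel H.Adj]
    (hG : (G.lapMatrix ℝ).IsHermitian) (hH : (H.lapMatrix ℝ).IsHermitian)
    (cG cH : ℕ → ℝ)
    (hcG : ∀ k, cG k = (-1 : ℝ) ^ k * ((G.lapMatrix ℝ).charpoly.coeff (n - k)))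
    (hcH : ∀ k, cH k = (-1 : ℝ) ^ k * ((H.lapMatrix ℝ).charpoly.coeff (n - k)))
    (hle : ∀ k, 1 ≤ k → k ≤ n - 1 → cG k ≤ cH k) :
    (∑ i, Real.sqrt (hG.eigenvalues i) ≤ ∑ i, Real.sqrt (hH.eigenvalues i)) ∧
    ((∃ k, 1 ≤ k ∧ k ≤ n - 1 ∧ cG k < cH k) →
      ∑ i, Real.sqrt (hG.eigenvalues i) < ∑ i, Real.sqrt (hH.eigenvalues i)) := by
  have hμ : ∀ i, 0 ≤ hG.eigenvalues i := fun i =>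
    (SimpleGraph.posSemidef_lapMatrix ℝ G).eigenvalues_nonneg i
  have hν : ∀ i, 0 ≤ hH.eigenvalues i := fun i =>
    (SimpleGraph.posSemidef_lapMatrix ℝ H).eigenvalues_nonneg i
  -- coefficient comparison
  have hck : ∀ k ≤ n, cG k ≤ cH k := by
    intro k hk
    rcases Nat.eq_zero_or_pos k with rfl | hk1
    · rw [hcG, hcH, Nat.sub_zero, coeff_top_lap, coeff_top_lap]
    rcases eq_or_lt_of_le hk with rfl | hkn
    · have hn : 0 < k := hk1
      rw [hcG, hcH, Nat.sub_self, coeff_zero_lap hn G, coeff_zero_lap hn H]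
    · exact hle k hk1 (by omega)
  -- pointwise products
  have hprodle : ∀ t : ℝ, 0 < t →
      ∏ i, (1 + hG.eigenvalues i * t) ≤ ∏ i, (1 + hH.eigenvalues i * t) := by
    intro t ht
    rw [prod_one_add_eigen hG ht, prod_one_add_eigen hH ht]
    apply Finset.sum_le_sum
    intro k hk
    have hkn : k ≤ n := Nat.lt_succ_iff.mp (Finset.mem_range.mp hk)
    rw [← hcG k, ← hcH k]
    exact mul_le_mul_of_nonneg_right (hck k hkn) (pow_nonneg ht.le k)
  have hprodpos : ∀ (ev : Fin n → ℝ), (∀ i, 0 ≤ ev i) → ∀ t : ℝ, 0 < t →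
      (0:ℝ) < ∏ i, (1 + ev i * t) := by
    intro ev hev t ht
    apply Finset.prod_pos
    intro i _
    nlinarith [hev i]
  -- integrals
  set fG : ℝ → ℝ := fun t => ∑ i, lelg (hG.eigenvalues i) t with hfG
  set fH : ℝ → ℝ := fun t => ∑ i, lelg (hH.eigenvalues i) t with hfH
  have hintG : IntegrableOn fG (Ioi 0) :=
    MeasureTheory.integrable_finset_sum _ (fun i _ => lelg_integrableOn (hμ i))
  have hintH : IntegrableOn fH (Ioi 0) :=
    MeasureTheory.integrable_finset_sum _ (fun i _ => lelg_integrableOn (hν i))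
  have hIG : ∫ t in Ioi (0:ℝ), fG t = 2 * Real.pi * ∑ i, Real.sqrt (hG.eigenvalues i) := by
    rw [hfG, MeasureTheory.integral_finset_sum _ (fun i _ => lelg_integrableOn (hμ i)),
      Finset.mul_sum]
    exact Finset.sum_congr rfl (fun i _ => lelg_integral (hμ i))
  have hIH : ∫ t in Ioi (0:ℝ), fH t = 2 * Real.pi * ∑ i, Real.sqrt (hH.eigenvalues i) := by
    rw [hfH, MeasureTheory.integral_finset_sum _ (fun i _ => lelg_integrableOn (hν i)),
      Finset.mul_sum]
    exact Finset.sum_congr rfl (fun i _ => lelg_integral (hν i))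
  -- pointwise inequality between fG and fH
  have hsum_eq : ∀ (ev : Fin n → ℝ), (∀ i, 0 ≤ ev i) → ∀ t : ℝ, 0 < t →
      ∑ i, lelg (ev i) t = Real.log (∏ i, (1 + ev i * t)) / (t * Real.sqrt t) := by
    intro ev hev t ht
    rw [Real.log_prod]
    · rw [Finset.sum_div]
      rfl
    · intro i _
      nlinarith [hev i]
  have hfle : ∀ t ∈ Ioi (0:ℝ), fG t ≤ fH t := by
    intro t ht
    have ht' : (0:ℝ) < t := ht
    show ∑ i, lelg (hG.eigenvalues i) t ≤ ∑ i, lelg (hH.eigenvalues i) t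
    rw [hsum_eq _ hμ t ht', hsum_eq _ hν t ht']
    have hts : (0:ℝ) < t * Real.sqrt t := by positivity
    exact (div_le_div_iff_of_pos_right hts).2
      (Real.log_le_log (hprodpos _ hμ t ht') (hprodle t ht'))
  have hwle : ∑ i, Real.sqrt (hG.eigenvalues i) ≤ ∑ i, Real.sqrt (hH.eigenvalues i) := by
    have hint_le : ∫ t in Ioi (0:ℝ), fG t ≤ ∫ t in Ioi (0:ℝ), fH t :=
      MeasureTheory.setIntegral_mono_on hintG hintH measurableSet_Ioi hfle
    rw [hIG, hIH] at hint_le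
    have hpi : (0:ℝ) < 2 * Real.pi := by positivity
    exact le_of_mul_le_mul_left hint_le hpi
  refine ⟨hwle, ?_⟩
  rintro ⟨k, hk1, hkn1, hklt⟩
  have hprodlt : ∀ t : ℝ, 0 < t →
      ∏ i, (1 + hG.eigenvalues i * t) < ∏ i, (1 + hH.eigenvalues i * t) := by
    intro t ht
    rw [prod_one_add_eigen hG ht, prod_one_add_eigen hH ht]
    apply Finset.sum_lt_sum
    · intro j hj
      have hjn : j ≤ n := Nat.lt_succ_iff.mp (Finset.mem_range.mp hj)
      rw [← hcG j, ← hcH j]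
      exact mul_le_mul_of_nonneg_right (hck j hjn) (pow_nonneg ht.le j)
    · refine ⟨k, Finset.mem_range.mpr (by omega), ?_⟩
      rw [← hcG k, ← hcH k]
      exact mul_lt_mul_of_pos_right hklt (pow_pos ht k)
  have hflt : ∀ t ∈ Ioi (0:ℝ), fG t < fH t := by
    intro t ht
    have ht' : (0:ℝ) < t := ht
    show ∑ i, lelg (hG.eigenvalues i) t < ∑ i, lelg (hH.eigenvalues i) t
    rw [hsum_eq _ hμ t ht', hsum_eq _ hν t ht']
    have hts : (0:ℝ) < t * Real.sqrt t := by positivity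
    exact (div_lt_div_iff_of_pos_right hts).2
      (Real.log_lt_log (hprodpos _ hμ t ht') (hprodlt t ht'))
  have hpos : 0 < ∫ t in Ioi (0:ℝ), (fH t - fG t) := by
    rw [MeasureTheory.setIntegral_pos_iff_support_of_nonneg_ae]
    · apply lt_of_lt_of_le _ (measure_mono (subset_inter
        (fun t ht => (sub_pos.2 (hflt t ht)).ne') Subset.rfl))
      rw [Real.volume_Ioi]
      exact ENNReal.zero_lt_top
    · refine (ae_restrict_iff' measurableSet_Ioi).2 (ae_of_all _ ?_)
      intro t ht
      exact sub_nonneg.2 (hfle t ht)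
    · exact hintH.sub hintG
  have hint_lt : ∫ t in Ioi (0:ℝ), fG t < ∫ t in Ioi (0:ℝ), fH t := by
    have := MeasureTheory.integral_sub hintH hintG
    rw [this] at hpos
    linarith
  rw [hIG, hIH] at hint_lt
  have hpi : (0:ℝ) < 2 * Real.pi := by positivity
  exact lt_of_mul_lt_mul_left hint_lt hpi.le
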